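/- Suppose an F-PD (U_r, V_r, W_r)_{r=1}^F of Φ_{m,p,n} over ℝ is (scaling+trace)-equivalent to a discrete F-PD (U'_r, V'_r, W'_r) with all entries in qℤ for some q ≠ 0. Then for every choice of integers β_1,…,β_F, the characteristic polynomial of (1/q³) Σ_{r=1}^F β_r W_r V_r U_r has integer coefficients. -/

import Mathlib

open Polynomial Matrix

lemma charpoly_conj_aux {N : ℕ} (P M : Matrix (Fin N) (Fin N) ℝ) (hP : IsUnit P) :
    (P * M * P⁻¹).charpoly = M.charpoly := by
  have hPd : IsUnit P.det := (Matrix.isUnit_iff_isUnit_det P).mp hP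
  have hkey : charmatrix (P * M * P⁻¹) =
      P.map C * charmatrix M * P⁻¹.map C := by
    have h1 : (P.map (C : ℝ →+* ℝ[X]) : Matrix (Fin N) (Fin N) ℝ[X]) *
        (P⁻¹.map C) = 1 := by
      rw [← Matrix.map_mul, Matrix.mul_nonsing_inv _ hPd]
      simp
    rw [charmatrix, charmatrix]
    rw [mul_sub, sub_mul]
    congr 1
    · have hc : Commute (Matrix.scalar (Fin N) (X : ℝ[X])) (P⁻¹.map C) :=
        Matrix.scalar_commute _ (fun r' => Commute.all _ _) _
      rw [mul_assoc, hc.eq, ← mul_assoc, h1, one_mul]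
    · simp [RingHom.mapMatrix_apply, Matrix.map_mul]
  rw [Matrix.charpoly, Matrix.charpoly, hkey, det_mul, det_mul]
  have h2 : (P.map (C : ℝ →+* ℝ[X])).det * (P⁻¹.map C).det = 1 := by
    rw [← det_mul, ← Matrix.map_mul, Matrix.mul_nonsing_inv _ hPd]
    simp
  calc (P.map (C : ℝ →+* ℝ[X])).det * (charmatrix M).det * (P⁻¹.map C).det
      = (charmatrix M).det * ((P.map C).det * (P⁻¹.map C).det) := by ring
    _ = (charmatrix M).det := by rw [h2, mul_one]

def IsFPD (m p n F : ℕ) (U : Fin F → Matrix (Fin p) (Fin m) ℝ)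
    (V : Fin F → Matrix (Fin n) (Fin p) ℝ) (W : Fin F → Matrix (Fin m) (Fin n) ℝ) : Prop :=
  ∀ (A : Matrix (Fin m) (Fin p) ℝ) (B : Matrix (Fin p) (Fin n) ℝ),
    A * B = ∑ r, ((U r * A).trace * (V r * B).trace) • W r

/-- If an `F`-PD of `Φ_{m,p,n}` is (scaling+trace)-equivalent to a discrete `F`-PD whose entries
all lie in `qℤ` (`q ≠ 0`), then for every choice of integers `β_r`, the characteristic polynomial
of `(1/q³) Σ_r β_r W_r V_r U_r` has integer coefficients. -/
theorem stmt15 {m p n F : ℕ} (q : ℝ) (hq : q ≠ 0)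
    (U U' : Fin F → Matrix (Fin p) (Fin m) ℝ) (V V' : Fin F → Matrix (Fin n) (Fin p) ℝ)
    (W W' : Fin F → Matrix (Fin m) (Fin n) ℝ)
    (h : IsFPD m p n F U V W) (h' : IsFPD m p n F U' V' W')
    (P : Matrix (Fin m) (Fin m) ℝ) (Q : Matrix (Fin p) (Fin p) ℝ)
    (R : Matrix (Fin n) (Fin n) ℝ)
    (hP : IsUnit P) (hQ : IsUnit Q) (hR : IsUnit R)
    (lam mu nu : Fin F → ℝ) (hscale : ∀ r, lam r * mu r * nu r = 1)
    (hU : ∀ r, lam r • U' r = Q⁻¹ * U r * P)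
    (hV : ∀ r, mu r • V' r = R⁻¹ * V r * Q)
    (hW : ∀ r, nu r • W' r = P⁻¹ * W r * R)
    (hU' : ∀ r i j, ∃ k : ℤ, U' r i j = q * k)
    (hV' : ∀ r i j, ∃ k : ℤ, V' r i j = q * k)
    (hW' : ∀ r i j, ∃ k : ℤ, W' r i j = q * k) :
    ∀ β : Fin F → ℤ, ∀ i, ∃ k : ℤ,
      ((1 / q ^ 3) • ∑ r, (β r : ℝ) • (W r * V r * U r)).charpoly.coeff i = (k : ℝ) := by
  intro β i
  have hPd : IsUnit P.det := (Matrix.isUnit_iff_isUnit_det P).mp hP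
  have hQd : IsUnit Q.det := (Matrix.isUnit_iff_isUnit_det Q).mp hQ
  have hRd : IsUnit R.det := (Matrix.isUnit_iff_isUnit_det R).mp hR
  -- integer matrices underlying the discrete FPD
  set u : Fin F → Matrix (Fin p) (Fin m) ℤ :=
    fun r => Matrix.of fun i j => (hU' r i j).choose with hu_def
  set v : Fin F → Matrix (Fin n) (Fin p) ℤ :=
    fun r => Matrix.of fun i j => (hV' r i j).choose with hv_def
  set w : Fin F → Matrix (Fin m) (Fin n) ℤ :=
    fun r => Matrix.of fun i j => (hW' r i j).choose with hw_def
  have hu : ∀ r, U' r = q • (u r).map (Int.cast : ℤ → ℝ) := by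
    intro r; ext i j
    simp only [Matrix.smul_apply, Matrix.map_apply, smul_eq_mul, hu_def, Matrix.of_apply]
    exact (hU' r i j).choose_spec
  have hv : ∀ r, V' r = q • (v r).map (Int.cast : ℤ → ℝ) := by
    intro r; ext i j
    simp only [Matrix.smul_apply, Matrix.map_apply, smul_eq_mul, hv_def, Matrix.of_apply]
    exact (hV' r i j).choose_spec
  have hw : ∀ r, W' r = q • (w r).map (Int.cast : ℤ → ℝ) := by
    intro r; ext i j
    simp only [Matrix.smul_apply, Matrix.map_apply, smul_eq_mul, hw_def, Matrix.of_apply]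
    exact (hW' r i j).choose_spec
  -- conjugation identity
  have hM : ∀ r, W r * V r * U r = P * (W' r * V' r * U' r) * P⁻¹ := by
    intro r
    have hUr : U r = Q * (lam r • U' r) * P⁻¹ := by
      rw [hU r, ← Matrix.mul_assoc, Matrix.mul_nonsing_inv_cancel_left _ _ hQd,
        Matrix.mul_nonsing_inv_cancel_right _ _ hPd]
    have hVr : V r = R * (mu r • V' r) * Q⁻¹ := by
      rw [hV r, ← Matrix.mul_assoc, Matrix.mul_nonsing_inv_cancel_left _ _ hRd,
        Matrix.mul_nonsing_inv_cancel_right _ _ hQd]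
    have hWr : W r = P * (nu r • W' r) * R⁻¹ := by
      rw [hW r, ← Matrix.mul_assoc, Matrix.mul_nonsing_inv_cancel_left _ _ hPd,
        Matrix.mul_nonsing_inv_cancel_right _ _ hRd]
    rw [hUr, hVr, hWr]
    simp only [Matrix.smul_mul, Matrix.mul_smul, smul_smul, Matrix.mul_assoc,
      Matrix.nonsing_inv_mul_cancel_left _ _ hRd, Matrix.nonsing_inv_mul_cancel_left _ _ hQd]
    have hc : lam r * (mu r * nu r) = 1 := by linear_combination hscale r
    rw [hc, one_smul]
  have hsum : ((1 / q ^ 3) • ∑ r, (β r : ℝ) • (W r * V r * U r))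
      = P * ((1 / q ^ 3) • ∑ r, (β r : ℝ) • (W' r * V' r * U' r)) * P⁻¹ := by
    simp only [hM, Matrix.mul_smul, Matrix.smul_mul, Finset.mul_sum, Finset.sum_mul]
  -- the inner matrix is an integer matrix
  set N : Matrix (Fin m) (Fin m) ℤ := ∑ r, β r • (w r * v r * u r) with hN_def
  have hT : ((1 / q ^ 3) • ∑ r, (β r : ℝ) • (W' r * V' r * U' r))
      = N.map (Int.cast : ℤ → ℝ) := by
    have per : ∀ r, W' r * V' r * U' r
        = q ^ 3 • ((w r * v r * u r).map (Int.cast : ℤ → ℝ)) := by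
      intro r
      rw [hu r, hv r, hw r]
      have hmm : ((w r * v r * u r).map (Int.cast : ℤ → ℝ))
          = (w r).map Int.cast * (v r).map Int.cast * (u r).map Int.cast := by
        rw [show (Int.cast : ℤ → ℝ) = ⇑(Int.castRingHom ℝ) from rfl,
          Matrix.map_mul, Matrix.map_mul]
        rfl
      rw [hmm]
      simp only [Matrix.smul_mul, Matrix.mul_smul, smul_smul]
      congr 1
      ring
    have hNmap : N.map (Int.cast : ℤ → ℝ)
        = ∑ r, (β r : ℝ) • ((w r * v r * u r).map (Int.cast : ℤ → ℝ)) := by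
      have : N.map (Int.cast : ℤ → ℝ) = (Int.castRingHom ℝ).mapMatrix N := rfl
      rw [this, hN_def, map_sum]
      refine Finset.sum_congr rfl fun r _ => ?_
      rw [map_zsmul, Int.cast_smul_eq_zsmul]
      rfl
    rw [hNmap, Finset.smul_sum]
    refine Finset.sum_congr rfl fun r _ => ?_
    rw [per r, smul_smul, smul_smul]
    congr 1
    field_simp
  rw [hsum, hT, charpoly_conj_aux _ _ hP]
  have : ((N.map (Int.cast : ℤ → ℝ)).charpoly)
      = N.charpoly.map (Int.castRingHom ℝ) := Matrix.charpoly_map N (Int.castRingHom ℝ)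
  rw [this, Polynomial.coeff_map]
  exact ⟨N.charpoly.coeff i, rfl⟩
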